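/- arXiv:1212.3949 — 2 statements merged into one kernel-verified Lean document; each statement's English description precedes it below -/
import Mathlib

section
/- Let M be a Γ-semiring, B a generalized bi-Γ-ideal of M, and A a nonempty subset of M. Then BΓA is a generalized bi-Γ-ideal of M. -/
/-- A Γ-semiring: additive commutative semigroups `M` and `G` with a triple
product `M → G → M → M` satisfying distributivity and associativity laws. -/
structure GammaSemiring (M G : Type*) [AddCommSemigroup M] [AddCommSemigroup G] where
  tmul : M → G → M → M
  left_distrib : ∀ a γ b c, tmul a γ (b + c) = tmul a γ b + tmul a γ c
  right_distrib : ∀ a b γ c, tmul (a + b) γ c = tmul a γ c + tmul b γ c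
  gamma_distrib : ∀ a γ δ b, tmul a (γ + δ) b = tmul a γ b + tmul a δ b
  mul_assoc : ∀ a γ b δ c, tmul (tmul a γ b) δ c = tmul a γ (tmul b δ c)

namespace GammaSemiring

variable {M G : Type*} [AddCommSemigroup M] [AddCommSemigroup G]

/-- `AΓB`: the set of all finite (nonempty) sums `Σᵢ aᵢγᵢbᵢ` with `aᵢ ∈ A`,
`γᵢ ∈ Γ`, `bᵢ ∈ B`, realized as the additive subsemigroup closure of the set
of single products. -/
def sprod (gs : GammaSemiring M G) (A B : Set M) : Set M :=
  (AddSubsemigroup.closure {x | ∃ a ∈ A, ∃ γ : G, ∃ b ∈ B, x = gs.tmul a γ b} :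
    AddSubsemigroup M)

/-- A generalized bi-Γ-ideal of `M`: a nonempty subset `A` with `AΓMΓA ⊆ A`. -/
def IsGenBiIdeal (gs : GammaSemiring M G) (A : Set M) : Prop :=
  A.Nonempty ∧ gs.sprod (gs.sprod A Set.univ) A ⊆ A

/-- A sub-Γ-semiring: nonempty, closed under addition and the Γ-product. -/
def IsSubGammaSemiring (gs : GammaSemiring M G) (T : Set M) : Prop :=
  T.Nonempty ∧ (∀ a ∈ T, ∀ b ∈ T, a + b ∈ T) ∧
    ∀ a ∈ T, ∀ γ : G, ∀ b ∈ T, gs.tmul a γ b ∈ T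

/-- A generalized bi-Γ-ideal of the Γ-semiring `T` (a subset of `M`):
a nonempty subset `A ⊆ T` with `AΓTΓA ⊆ A`. -/
def IsGenBiIdealIn (gs : GammaSemiring M G) (T A : Set M) : Prop :=
  A.Nonempty ∧ A ⊆ T ∧ gs.sprod (gs.sprod A T) A ⊆ A

/-- A Γ-ideal of `M`. -/
def IsGammaIdeal (gs : GammaSemiring M G) (A : Set M) : Prop :=
  A.Nonempty ∧ (∀ a ∈ A, ∀ b ∈ A, a + b ∈ A) ∧
    ∀ a ∈ A, ∀ γ : G, ∀ x : M, gs.tmul x γ a ∈ A ∧ gs.tmul a γ x ∈ A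

/-- A quasi-Γ-ideal of `M`: a sub-Γ-semiring `A` with `AΓM ∩ MΓA ⊆ A`. -/
def IsQuasiGammaIdeal (gs : GammaSemiring M G) (A : Set M) : Prop :=
  gs.IsSubGammaSemiring A ∧ gs.sprod A Set.univ ∩ gs.sprod Set.univ A ⊆ A

/-- A bi-Γ-ideal of `M`: a sub-Γ-semiring `A` with `AΓMΓA ⊆ A`. -/
def IsBiIdeal (gs : GammaSemiring M G) (A : Set M) : Prop :=
  gs.IsSubGammaSemiring A ∧ gs.sprod (gs.sprod A Set.univ) A ⊆ A

/-- `M` is GB-simple: `M` is its unique generalized bi-Γ-ideal. -/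
def GBSimple (gs : GammaSemiring M G) : Prop :=
  ∀ A : Set M, gs.IsGenBiIdeal A → A = Set.univ

/-- The sub-Γ-semiring `T`, regarded as a Γ-semiring, is GB-simple. -/
def GBSimpleIn (gs : GammaSemiring M G) (T : Set M) : Prop :=
  ∀ A : Set M, gs.IsGenBiIdealIn T A → A = T

end GammaSemiring

open GammaSemiring

variable {M G : Type*} [AddCommSemigroup M] [AddCommSemigroup G]

lemma GammaSemiring.tmul_mem_sprod (gs : GammaSemiring M G) {A B : Set M} {a b : M}
    (ha : a ∈ A) (hb : b ∈ B) (γ : G) : gs.tmul a γ b ∈ gs.sprod A B :=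
  AddSubsemigroup.subset_closure ⟨a, ha, γ, b, hb, rfl⟩

lemma GammaSemiring.add_mem_sprod (gs : GammaSemiring M G) {A B : Set M} {x y : M}
    (hx : x ∈ gs.sprod A B) (hy : y ∈ gs.sprod A B) : x + y ∈ gs.sprod A B :=
  AddSubsemigroup.add_mem _ hx hy

lemma GammaSemiring.sprod_induction (gs : GammaSemiring M G) {A B : Set M} {p : M → Prop} {x : M}
    (hx : x ∈ gs.sprod A B)
    (base : ∀ a ∈ A, ∀ γ : G, ∀ b ∈ B, p (gs.tmul a γ b))
    (hadd : ∀ x y, p x → p y → p (x + y)) : p x := by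
  refine AddSubsemigroup.closure_induction ?_ (fun x y _ _ => hadd x y) hx
  rintro x ⟨a, ha, γ, b, hb, rfl⟩
  exact base a ha γ b hb

lemma GammaSemiring.sprod_mono (gs : GammaSemiring M G) {A A' B B' : Set M} (hA : A ⊆ A') (hB : B ⊆ B') :
    gs.sprod A B ⊆ gs.sprod A' B' := fun _ hx =>
  gs.sprod_induction hx (fun _ ha γ _ hb => gs.tmul_mem_sprod (hA ha) (hB hb) γ)
    (fun _ _ => gs.add_mem_sprod)

lemma GammaSemiring.sprod_assoc₁ (gs : GammaSemiring M G) (A B C : Set M) :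
    gs.sprod (gs.sprod A B) C ⊆ gs.sprod A (gs.sprod B C) := by
  intro x hx
  refine gs.sprod_induction hx ?_ (fun _ _ => gs.add_mem_sprod)
  intro u hu δ c hc
  refine gs.sprod_induction (p := fun u => gs.tmul u δ c ∈ gs.sprod A (gs.sprod B C)) hu ?_ ?_
  · intro a ha γ b hb
    rw [gs.mul_assoc]
    exact gs.tmul_mem_sprod ha (gs.tmul_mem_sprod hb hc δ) γ
  · intro x y hx hy
    rw [gs.right_distrib]
    exact gs.add_mem_sprod hx hy

lemma GammaSemiring.sprod_assoc₂ (gs : GammaSemiring M G) (A B C : Set M) :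
    gs.sprod A (gs.sprod B C) ⊆ gs.sprod (gs.sprod A B) C := by
  intro x hx
  refine gs.sprod_induction hx ?_ (fun _ _ => gs.add_mem_sprod)
  intro a ha γ w hw
  refine gs.sprod_induction (p := fun w => gs.tmul a γ w ∈ gs.sprod (gs.sprod A B) C) hw ?_ ?_
  · intro b hb δ c hc
    rw [← gs.mul_assoc]
    exact gs.tmul_mem_sprod (gs.tmul_mem_sprod ha hb γ) hc δ
  · intro x y hx hy
    rw [gs.left_distrib]
    exact gs.add_mem_sprod hx hy

theorem stmt13 [Nonempty G] (gs : GammaSemiring M G) (B : Set M)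
    (hB : gs.IsGenBiIdeal B) (A : Set M) (hA : A.Nonempty) :
    gs.IsGenBiIdeal (gs.sprod B A) := by
  obtain ⟨b, hb⟩ := hB.1
  obtain ⟨a, ha⟩ := hA
  constructor
  · exact ⟨_, gs.tmul_mem_sprod hb ha (Classical.arbitrary G)⟩
  · intro x hx
    have h1 : gs.sprod (gs.sprod (gs.sprod B A) Set.univ) (gs.sprod B A) ⊆
        gs.sprod (gs.sprod (gs.sprod (gs.sprod B A) Set.univ) B) A :=
      gs.sprod_assoc₂ _ _ _
    have h2 : gs.sprod (gs.sprod B A) Set.univ ⊆ gs.sprod B Set.univ := fun y hy =>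
      gs.sprod_mono (le_refl B) (Set.subset_univ _) (gs.sprod_assoc₁ B A Set.univ hy)
    have h3 : gs.sprod (gs.sprod (gs.sprod B A) Set.univ) B ⊆ B := fun y hy =>
      hB.2 (gs.sprod_mono h2 (le_refl B) hy)
    exact gs.sprod_mono h3 (le_refl A) (h1 hx)
end

section
/- Let M be a Γ-semiring, B a generalized bi-Γ-ideal of M, and A a nonempty subset of M. Then AΓB is a generalized bi-Γ-ideal of M. -/
namespace GammaSemiring

variable {M G : Type*} [AddCommSemigroup M] [AddCommSemigroup G]

lemma mem_sprod_of (gs : GammaSemiring M G) {A B : Set M} {a b : M}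
    (ha : a ∈ A) (γ : G) (hb : b ∈ B) : gs.tmul a γ b ∈ gs.sprod A B :=
  AddSubsemigroup.subset_closure ⟨a, ha, γ, b, hb, rfl⟩

lemma add_mem_sprod_s14 (gs : GammaSemiring M G) {A B : Set M} {x y : M}
    (hx : x ∈ gs.sprod A B) (hy : y ∈ gs.sprod A B) : x + y ∈ gs.sprod A B :=
  AddSubsemigroup.add_mem _ hx hy

lemma sprod_mono_s14 (gs : GammaSemiring M G) {A A' B B' : Set M}
    (hA : A ⊆ A') (hB : B ⊆ B') : gs.sprod A B ⊆ gs.sprod A' B' := by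
  apply AddSubsemigroup.closure_mono
  rintro x ⟨a, ha, γ, b, hb, rfl⟩
  exact ⟨a, hA ha, γ, b, hB hb, rfl⟩

lemma sprod_assoc (gs : GammaSemiring M G) (A B C : Set M) :
    gs.sprod (gs.sprod A B) C = gs.sprod A (gs.sprod B C) := by
  apply Set.Subset.antisymm
  · intro x hx
    induction hx using AddSubsemigroup.closure_induction with
    | mem z hz =>
      obtain ⟨p, hp, γ, c, hc, rfl⟩ := hz
      induction hp using AddSubsemigroup.closure_induction with
      | mem q hq =>
        obtain ⟨a, ha, δ, b, hb, rfl⟩ := hq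
        rw [gs.mul_assoc]
        exact gs.mem_sprod_of ha δ (gs.mem_sprod_of hb γ hc)
      | add q r hq hr ihq ihr =>
        rw [gs.right_distrib]
        exact gs.add_mem_sprod_s14 ihq ihr
    | add x y hx hy ihx ihy => exact gs.add_mem_sprod_s14 ihx ihy
  · intro x hx
    induction hx using AddSubsemigroup.closure_induction with
    | mem z hz =>
      obtain ⟨a, ha, γ, q, hq, rfl⟩ := hz
      induction hq using AddSubsemigroup.closure_induction with
      | mem r hr =>
        obtain ⟨b, hb, δ, c, hc, rfl⟩ := hr
        rw [← gs.mul_assoc]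
        exact gs.mem_sprod_of (gs.mem_sprod_of ha γ hb) δ hc
      | add q r hq hr ihq ihr =>
        rw [gs.left_distrib]
        exact gs.add_mem_sprod_s14 ihq ihr
    | add x y hx hy ihx ihy => exact gs.add_mem_sprod_s14 ihx ihy

end GammaSemiring

open GammaSemiring

variable {M G : Type*} [AddCommSemigroup M] [AddCommSemigroup G]

theorem stmt14 [Nonempty G] (gs : GammaSemiring M G) (B : Set M)
    (hB : gs.IsGenBiIdeal B) (A : Set M) (hA : A.Nonempty) :
    gs.IsGenBiIdeal (gs.sprod A B) := by
  obtain ⟨a, ha⟩ := hA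
  obtain ⟨⟨b, hb⟩, hB2⟩ := hB
  obtain ⟨γ⟩ := ‹Nonempty G›
  constructor
  · exact ⟨gs.tmul a γ b, gs.mem_sprod_of ha γ hb⟩
  · set X := gs.sprod A B with hX
    have h1 : gs.sprod (gs.sprod X Set.univ) X
        = gs.sprod A (gs.sprod B (gs.sprod Set.univ X)) := by
      rw [gs.sprod_assoc X Set.univ X, hX, gs.sprod_assoc]
    rw [h1]
    have h2 : gs.sprod B (gs.sprod Set.univ X) ⊆ B := by
      rw [← gs.sprod_assoc, hX, ← gs.sprod_assoc]
      have h3 : gs.sprod (gs.sprod B Set.univ) A ⊆ gs.sprod B Set.univ := by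
        rw [gs.sprod_assoc]
        exact gs.sprod_mono_s14 (le_refl B) (Set.subset_univ _)
      exact (gs.sprod_mono_s14 h3 (le_refl B)).trans hB2
    exact (gs.sprod_mono_s14 (le_refl A) h2).trans
      (by exact le_refl _)
end
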